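/- A threshold graph is the unique realization of its degree sequence: if $g$ is a threshold graph on $n$ labeled vertices (constructible from the empty graph by repeatedly adding either an isolated vertex or a dominating vertex), and $g'$ is any simple graph on the same vertex set with $\deg_{g'}(v) = \deg_g(v)$ for all $v$, then $g' = g$. -/
import Mathlib


/-- A threshold graph on `Fin n`: there is an order in which the vertices can be
added one at a time, each new vertex being either isolated (adjacent to no
earlier vertex) or dominating (adjacent to every earlier vertex). -/
def IsThreshold {n : ℕ} (g : SimpleGraph (Fin n)) : Prop :=
  ∃ (σ : Equiv.Perm (Fin n)) (c : Fin n → Bool),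
    ∀ i j : Fin n, i < j → (g.Adj (σ i) (σ j) ↔ c j = true)

open Finset

lemma deg_split {n : ℕ} (h : SimpleGraph (Fin n)) [DecidableRel h.Adj]
    (σ : Equiv.Perm (Fin n)) (j : Fin n) :
    h.degree (σ j) =
      (univ.filter fun i => i < j ∧ h.Adj (σ i) (σ j)).card +
      (univ.filter fun k => j < k ∧ h.Adj (σ j) (σ k)).card := by
  classical
  have h1 : h.degree (σ j) = (univ.filter fun i : Fin n => h.Adj (σ j) (σ i)).card := by
    rw [← SimpleGraph.card_neighborFinset_eq_degree]
    refine (Finset.card_bij' (fun i _ => σ i) (fun v _ => σ.symm v) ?_ ?_ ?_ ?_).symm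
    · intro i hi; simp [SimpleGraph.mem_neighborFinset] at hi ⊢; exact hi
    · intro v hv; simp [SimpleGraph.mem_neighborFinset] at hv ⊢; exact hv
    · intro i _; simp
    · intro v _; simp
  rw [h1, ← Finset.card_union_of_disjoint]
  · congr 1
    ext i
    simp only [mem_union, mem_filter, mem_univ, true_and]
    constructor
    · intro ha
      rcases lt_trichotomy i j with hlt | heq | hgt
      · exact Or.inl ⟨hlt, ha.symm⟩
      · exact absurd (heq ▸ ha) (h.irrefl)
      · exact Or.inr ⟨hgt, ha⟩
    · rintro (⟨_, ha⟩ | ⟨_, ha⟩)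
      · exact ha.symm
      · exact ha
  · rw [Finset.disjoint_left]
    intro i hi1 hi2
    simp only [mem_filter] at hi1 hi2
    omega

theorem threshold_aux {n : ℕ} (g g' : SimpleGraph (Fin n))
    [DecidableRel g.Adj] [DecidableRel g'.Adj]
    (hth : ∃ (σ : Equiv.Perm (Fin n)) (c : Fin n → Bool),
      ∀ i j : Fin n, i < j → (g.Adj (σ i) (σ j) ↔ c j = true))
    (hdeg : ∀ v, g'.degree v = g.degree v) :
    g' = g := by
  classical
  obtain ⟨σ, c, hc⟩ := hth
  have key : ∀ j i : Fin n, i < j → (g'.Adj (σ i) (σ j) ↔ c j = true) := by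
    intro j
    induction j using WellFoundedGT.induction with
    | _ j IH =>
    -- B sets equal
    have Beq : (univ.filter fun k => j < k ∧ g'.Adj (σ j) (σ k)) =
        (univ.filter fun k => j < k ∧ g.Adj (σ j) (σ k)) := by
      ext k
      simp only [mem_filter, mem_univ, true_and]
      constructor
      · rintro ⟨hjk, ha⟩; exact ⟨hjk, (hc j k hjk).mpr ((IH k hjk j hjk).mp ha)⟩
      · rintro ⟨hjk, ha⟩; exact ⟨hjk, (IH k hjk j hjk).mpr ((hc j k hjk).mp ha)⟩
    have hA : (univ.filter fun i => i < j ∧ g'.Adj (σ i) (σ j)).card =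
        (univ.filter fun i => i < j ∧ g.Adj (σ i) (σ j)).card := by
      have := hdeg (σ j)
      rw [deg_split g σ j, deg_split g' σ j, Beq] at this
      omega
    cases hcj : c j with
    | false =>
      have hAg : (univ.filter fun i => i < j ∧ g.Adj (σ i) (σ j)) = ∅ := by
        ext i; simp only [mem_filter, mem_univ, true_and, notMem_empty, iff_false]
        rintro ⟨hij, ha⟩
        simpa [hcj] using (hc i j hij).mp ha
      rw [hAg, Finset.card_empty, Finset.card_eq_zero] at hA
      intro i hij
      constructor
      · intro ha
        have hm : i ∈ (univ.filter fun i => i < j ∧ g'.Adj (σ i) (σ j)) := by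
          simp [hij, ha]
        rw [hA] at hm
        exact absurd hm (Finset.notMem_empty i)
      · intro hf; simp at hf
    | true =>
      have hAg : (univ.filter fun i => i < j ∧ g.Adj (σ i) (σ j)) =
          univ.filter (fun i => i < j) := by
        ext i; simp only [mem_filter, mem_univ, true_and]
        exact ⟨fun h => h.1, fun h => ⟨h, (hc i j h).mpr hcj⟩⟩
      rw [hAg] at hA
      have hsub : (univ.filter fun i => i < j ∧ g'.Adj (σ i) (σ j)) ⊆
          univ.filter (fun i => i < j) := by
        intro i hi; simp only [mem_filter, mem_univ, true_and] at hi ⊢; exact hi.1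
      have heq := Finset.eq_of_subset_of_card_le hsub (le_of_eq hA.symm)
      intro i hij
      simp only [hcj, iff_true]
      have : i ∈ univ.filter (fun i => i < j) := by simp [hij]
      rw [← heq] at this
      simp only [mem_filter, mem_univ, true_and] at this
      exact this.2
  ext u v
  set i := σ.symm u with hi
  set j := σ.symm v with hj
  have hu : σ i = u := σ.apply_symm_apply u
  have hv : σ j = v := σ.apply_symm_apply v
  rcases lt_trichotomy i j with hlt | heq | hgt
  · rw [← hu, ← hv, key j i hlt, hc i j hlt]
  · have : u = v := by rw [← hu, ← hv, heq]
    subst this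
    simp
  · rw [← hu, ← hv, g'.adj_comm, g.adj_comm, key i j hgt, hc j i hgt]

theorem stmt_19 {n : ℕ} (g g' : SimpleGraph (Fin n))
    [DecidableRel g.Adj] [DecidableRel g'.Adj]
    (hth : IsThreshold g) (hdeg : ∀ v, g'.degree v = g.degree v) :
    g' = g := threshold_aux g g' hth hdeg
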